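/- arXiv:2102.12872 — 3 statements merged into one kernel-verified Lean document; each statement's English description precedes it below -/
import Mathlib

section
/- Fix a prime q, an integer d ≥ 2, t = ⌈2·log_q d + 2⌉, and d distinct monic irreducible polynomials p_1, …, p_d of degree t over F = F_q. For any canonical box B = ∏_{i=1}^d [a_i/q^{k_i t}, (a_i+1)/q^{k_i t}), the preimage r^{−1}(B) ⊆ F[x] equals A + D·F[x], where D = p_1^{k_1}·p_2^{k_2}⋯p_d^{k_d} and A is the unique polynomial of degree less than t·(k_1+⋯+k_d) with r(A) ∈ B; moreover deg D = t·(k_1+⋯+k_d) = −log_q(vol(B)). -/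
open Finset Polynomial

/-- The value at `1/q` of a polynomial over `ZMod q`, with coefficients lifted to
`{0, 1, …, q−1} ⊆ ℝ`. -/
noncomputable def pev (q : ℕ) (g : Polynomial (ZMod q)) : ℝ :=
  ∑ j ∈ Finset.range (g.natDegree + 1), ((g.coeff j).val : ℝ) / (q : ℝ) ^ j

/-- `r_p(f)`: writing `f = f₀ + f₁ p + f₂ p² + ⋯` in base `p` (each `fᵢ` of degree `< t`,
obtained as `(f /ₘ p^i) %ₘ p`), the real number
`(f₀(1/q) + f₁(1/q) q^(−t) + f₂(1/q) q^(−2t) + ⋯)/q`. -/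
noncomputable def rp (q t : ℕ) (p f : Polynomial (ZMod q)) : ℝ :=
  (∑ i ∈ Finset.range (f.natDegree + 1), pev q ((f /ₘ p ^ i) %ₘ p) / (q : ℝ) ^ (i * t)) / q

/-- The map `r : F[x] → [0,1)^d`, `r(f) = (r_{p 1}(f), …, r_{p d}(f))`. -/
noncomputable def rmap (q t d : ℕ) (p : Fin d → Polynomial (ZMod q))
    (f : Polynomial (ZMod q)) : Fin d → ℝ :=
  fun i => rp q t (p i) f

/-- The canonical box `∏ i, [a i / q^(t * k i), (a i + 1) / q^(t * k i))`. -/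
def canonicalBox (q t d : ℕ) (k a : Fin d → ℕ) : Set (Fin d → ℝ) :=
  Set.univ.pi fun i =>
    Set.Ico ((a i : ℝ) / (q : ℝ) ^ (t * k i)) (((a i : ℝ) + 1) / (q : ℝ) ^ (t * k i))

/-- A basic box in base `q` in `[0,1]^d` of volume `q^(-n)`. -/
def IsBasicBox (q d n : ℕ) (β : Set (Fin d → ℝ)) : Prop :=
  ∃ k a : Fin d → ℕ, (∀ i, a i + 1 ≤ q ^ k i) ∧ (∑ i, k i) = n ∧
    β = Set.univ.pi fun i =>
      Set.Ico ((a i : ℝ) / (q : ℝ) ^ k i) (((a i : ℝ) + 1) / (q : ℝ) ^ k i)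

/-- A canonical box with parameter `t`, as a set. -/
def IsCanonicalBox (q t d : ℕ) (B : Set (Fin d → ℝ)) : Prop :=
  ∃ k a : Fin d → ℕ, (∀ i, a i + 1 ≤ q ^ (t * k i)) ∧ B = canonicalBox q t d k a

/-- `(B, β)` is a good pair: `β` is a basic box of volume `q^(-n)` and `B` is the
smallest canonical box containing `β`. -/
def IsGoodPair (q t d n : ℕ) (B β : Set (Fin d → ℝ)) : Prop :=
  IsBasicBox q d n β ∧ IsCanonicalBox q t d B ∧ β ⊆ B ∧
    ∀ B' : Set (Fin d → ℝ), IsCanonicalBox q t d B' → β ⊆ B' → B ⊆ B'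

/-- The polynomial obtained from `f` by setting the coefficients of
`x^0, x^1, …, x^(c-1)` to zero. -/
noncomputable def eraseLow (q : ℕ) (c : ℕ) (f : Polynomial (ZMod q)) : Polynomial (ZMod q) :=
  ∑ j ∈ f.support.filter (fun j => c ≤ j), Polynomial.monomial j (f.coeff j)


set_option linter.unusedSectionVars false

section Aux

variable {q t : ℕ} [Fact q.Prime]

/-- Natural-number value of the coefficient tuple of `g` (degree `< t`), base `q`. -/
noncomputable def nv (q t : ℕ) (g : Polynomial (ZMod q)) : ℕ :=
  ∑ j ∈ Finset.range t, (g.coeff j).val * q ^ (t - 1 - j)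

/-- `i`-th base-`p` digit of `f`. -/
noncomputable def dig (q : ℕ) (p f : Polynomial (ZMod q)) (i : ℕ) : Polynomial (ZMod q) :=
  (f /ₘ p ^ i) %ₘ p

/-- Natural number encoding the first `k` base-`p` digits of `f`. -/
noncomputable def Vd (q t : ℕ) (p f : Polynomial (ZMod q)) (k : ℕ) : ℕ :=
  ∑ i ∈ Finset.range k, nv q t (dig q p f i) * q ^ (t * (k - 1 - i))

lemma q2 : 2 ≤ q := (Fact.out : q.Prime).two_le

lemma nv_succ (g : Polynomial (ZMod q)) :
    nv q (t + 1) g = q * nv q t g + (g.coeff t).val := by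
  unfold nv
  rw [Finset.sum_range_succ, Finset.mul_sum]
  have h0 : t + 1 - 1 - t = 0 := by omega
  rw [h0, pow_zero, mul_one]
  congr 1
  refine Finset.sum_congr rfl fun j hj => ?_
  rw [Finset.mem_range] at hj
  rw [show t + 1 - 1 - j = (t - 1 - j) + 1 by omega, pow_succ]
  ring

lemma nv_lt (t : ℕ) (g : Polynomial (ZMod q)) : nv q t g < q ^ t := by
  induction t with
  | zero => simp [nv]
  | succ t ih =>
    have h2 : (g.coeff t).val < q := ZMod.val_lt _
    have hq : 0 < q := by have := (q2 (q := q)); omega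
    rw [nv_succ, pow_succ]
    have h3 : q * nv q t g + (g.coeff t).val + 1 ≤ q * (nv q t g + 1) := by
      rw [Nat.mul_add, Nat.mul_one]; omega
    have h4 : q * (nv q t g + 1) ≤ q * q ^ t := Nat.mul_le_mul_left _ ih
    calc q * nv q t g + (g.coeff t).val < q * (nv q t g + 1) := by omega
    _ ≤ q * q ^ t := h4
    _ = q ^ t * q := by ring

lemma nv_coeff_eq {g g' : Polynomial (ZMod q)} (t : ℕ) (h : nv q t g = nv q t g') :
    ∀ j < t, g.coeff j = g'.coeff j := by
  induction t with
  | zero => intro j hj; omega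
  | succ t ih =>
    rw [nv_succ, nv_succ] at h
    have hq : 0 < q := by have := (q2 (q := q)); omega
    have hc : (g.coeff t).val = (g'.coeff t).val := by
      have := congrArg (· % q) h
      simpa [Nat.mul_add_mod, Nat.mod_eq_of_lt (ZMod.val_lt _)] using this
    have hA : nv q t g = nv q t g' := by
      exact Nat.eq_of_mul_eq_mul_left hq (by omega)
    intro j hj
    rcases Nat.lt_succ_iff_lt_or_eq.mp hj with hj' | rfl
    · exact ih hA j hj'
    · exact ZMod.val_injective q hc

lemma eq_of_nv_eq {g g' : Polynomial (ZMod q)} (hg : g.degree < (t : ℕ))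
    (hg' : g'.degree < (t : ℕ)) (h : nv q t g = nv q t g') : g = g' := by
  ext j
  rcases lt_or_ge j t with hj | hj
  · exact nv_coeff_eq t h j hj
  · have hjc : ((t : ℕ) : WithBot ℕ) ≤ (j : ℕ) := by exact_mod_cast hj
    rw [Polynomial.coeff_eq_zero_of_degree_lt (lt_of_lt_of_le hg hjc),
      Polynomial.coeff_eq_zero_of_degree_lt (lt_of_lt_of_le hg' hjc)]

variable {p f g : Polynomial (ZMod q)}

lemma deg_pow (hp : p.Monic) (hpt : p.natDegree = t) (i : ℕ) :
    (p ^ i).degree = ((t * i : ℕ) : WithBot ℕ) := by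
  rw [degree_eq_natDegree (hp.pow i).ne_zero, hp.natDegree_pow, hpt, Nat.mul_comm]

lemma dig_degree_lt (hp : p.Monic) (hpt : p.natDegree = t) (f : Polynomial (ZMod q)) (i : ℕ) :
    (dig q p f i).degree < (t : ℕ) := by
  have := degree_modByMonic_lt (f /ₘ p ^ i) hp
  rwa [degree_eq_natDegree hp.ne_zero, hpt] at this

lemma dig_eq_zero (hp : p.Monic) (hpt : p.natDegree = t) (ht1 : 1 ≤ t)
    {i : ℕ} (h : f.natDegree < i) : dig q p f i = 0 := by
  have h1 : f /ₘ p ^ i = 0 := by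
    rw [divByMonic_eq_zero_iff (hp.pow i), deg_pow hp hpt]
    calc f.degree ≤ (f.natDegree : WithBot ℕ) := degree_le_natDegree
    _ < ((t * i : ℕ) : WithBot ℕ) := by
        rw [Nat.cast_lt]
        calc f.natDegree < i := h
        _ ≤ t * i := Nat.le_mul_of_pos_left i (by omega)
  rw [dig, h1, zero_modByMonic]

lemma div_pow_succ (hp : p.Monic) (i : ℕ) (f : Polynomial (ZMod q)) :
    f /ₘ p ^ (i + 1) = (f /ₘ p) /ₘ p ^ i := by
  nontriviality (ZMod q)
  refine (div_modByMonic_unique ((f /ₘ p) /ₘ p ^ i) ((f /ₘ p) %ₘ p ^ i * p + f %ₘ p)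
    (hp.pow (i + 1)) ⟨?_, ?_⟩).1
  · have e1 := modByMonic_add_div f p
    have e2 := modByMonic_add_div (f /ₘ p) (p ^ i)
    calc (f /ₘ p) %ₘ p ^ i * p + f %ₘ p + p ^ (i + 1) * ((f /ₘ p) /ₘ p ^ i)
        = ((f /ₘ p) %ₘ p ^ i + p ^ i * ((f /ₘ p) /ₘ p ^ i)) * p + f %ₘ p := by ring
    _ = f := by rw [e2]; linear_combination e1
  · have hd1 : ((f /ₘ p) %ₘ p ^ i * p).degree < ((p.natDegree * (i + 1) : ℕ) : WithBot ℕ) := by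
      rcases eq_or_ne ((f /ₘ p) %ₘ p ^ i) 0 with h0 | h0
      · rw [h0, zero_mul, degree_zero]; exact WithBot.bot_lt_coe _
      · rw [degree_mul, degree_eq_natDegree h0, degree_eq_natDegree hp.ne_zero]
        have h2 : ((f /ₘ p) %ₘ p ^ i).natDegree < p.natDegree * i := by
          have := degree_modByMonic_lt (f /ₘ p) (hp.pow i)
          rw [deg_pow hp rfl, degree_eq_natDegree h0, Nat.cast_lt] at this
          exact this
        rw [← Nat.cast_add, Nat.cast_lt]
        calc ((f /ₘ p) %ₘ p ^ i).natDegree + p.natDegree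
            < p.natDegree * i + p.natDegree := by omega
        _ = p.natDegree * (i + 1) := by ring
    have hd2 : (f %ₘ p).degree < ((p.natDegree * (i + 1) : ℕ) : WithBot ℕ) := by
      calc (f %ₘ p).degree < p.degree := degree_modByMonic_lt f hp
      _ ≤ ((p.natDegree * (i + 1) : ℕ) : WithBot ℕ) := by
          rw [degree_eq_natDegree hp.ne_zero, Nat.cast_le]
          exact Nat.le_mul_of_pos_right _ (Nat.succ_pos i)
    calc ((f /ₘ p) %ₘ p ^ i * p + f %ₘ p).degree
        ≤ max ((f /ₘ p) %ₘ p ^ i * p).degree (f %ₘ p).degree := degree_add_le _ _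
    _ < ((p.natDegree * (i + 1) : ℕ) : WithBot ℕ) := max_lt hd1 hd2
    _ = (p ^ (i + 1)).degree := (deg_pow hp rfl (i + 1)).symm

lemma dig_succ (hp : p.Monic) (i : ℕ) (f : Polynomial (ZMod q)) :
    dig q p f (i + 1) = dig q p (f /ₘ p) i := by
  rw [dig, dig, div_pow_succ hp]

lemma dig_zero (f : Polynomial (ZMod q)) : dig q p f 0 = f %ₘ p := by
  rw [dig, pow_zero, divByMonic_one]

lemma reconstruct (hp : p.Monic) (hpt : p.natDegree = t) :
    ∀ (k : ℕ) (f : Polynomial (ZMod q)), f.degree < ((t * k : ℕ) : WithBot ℕ) →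
      f = ∑ i ∈ Finset.range k, dig q p f i * p ^ i := by
  intro k
  induction k with
  | zero =>
    intro f hf
    rw [Nat.mul_zero, Nat.cast_zero] at hf
    rw [Finset.sum_range_zero, degree_eq_bot.mp (Nat.WithBot.lt_zero_iff.mp hf)]
  | succ k ih =>
    intro f hf
    have hdiv : (f /ₘ p).degree < ((t * k : ℕ) : WithBot ℕ) := by
      rcases eq_or_ne (f /ₘ p) 0 with h0 | h0
      · rw [h0, degree_zero]; exact WithBot.bot_lt_coe _
      · have hf0 : f ≠ 0 := by
          intro h; rw [h, zero_divByMonic] at h0; exact h0 rfl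
        rw [degree_eq_natDegree h0, Nat.cast_lt, natDegree_divByMonic f hp, hpt]
        rw [degree_eq_natDegree hf0, Nat.cast_lt] at hf
        have ht1 : 1 ≤ t := by
          by_contra h
          have : t = 0 := by omega
          rw [this] at hf; omega
        have hge : t ≤ f.natDegree := by
          by_contra hlt
          apply h0
          rw [divByMonic_eq_zero_iff hp, degree_eq_natDegree hf0,
            degree_eq_natDegree hp.ne_zero, hpt, Nat.cast_lt]
          omega
        have hm : t * (k + 1) = t * k + t := by ring
        omega
    have hrec := ih (f /ₘ p) hdiv
    rw [Finset.sum_range_succ']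
    have : ∀ i ∈ Finset.range k, dig q p f (i + 1) * p ^ (i + 1)
        = dig q p (f /ₘ p) i * p ^ i * p := by
      intro i _
      rw [dig_succ hp, pow_succ]; ring
    rw [Finset.sum_congr rfl this, ← Finset.sum_mul, ← hrec, dig_zero, pow_zero, mul_one]
    have := modByMonic_add_div f p
    linear_combination -this

lemma dig_mod (hp : p.Monic) {i k : ℕ} (hik : i < k) (f : Polynomial (ZMod q)) :
    dig q p (f %ₘ p ^ k) i = dig q p f i := by
  nontriviality (ZMod q)
  have key : f /ₘ p ^ i = f /ₘ p ^ k * p ^ (k - i) + (f %ₘ p ^ k) /ₘ p ^ i := by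
    refine (div_modByMonic_unique _ ((f %ₘ p ^ k) %ₘ p ^ i) (hp.pow i) ⟨?_, ?_⟩).1
    · have e1 := modByMonic_add_div f (p ^ k)
      have e2 := modByMonic_add_div (f %ₘ p ^ k) (p ^ i)
      have hpk : p ^ i * p ^ (k - i) = p ^ k := by
        rw [← pow_add]; congr 1; omega
      calc (f %ₘ p ^ k) %ₘ p ^ i + p ^ i * (f /ₘ p ^ k * p ^ (k - i) + (f %ₘ p ^ k) /ₘ p ^ i)
          = (p ^ i * p ^ (k - i)) * (f /ₘ p ^ k)
            + ((f %ₘ p ^ k) %ₘ p ^ i + p ^ i * ((f %ₘ p ^ k) /ₘ p ^ i)) := by ring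
      _ = f := by rw [hpk, e2]; linear_combination e1
    · exact degree_modByMonic_lt _ (hp.pow i)
  rw [dig, dig, key, add_modByMonic]
  have hz : (f /ₘ p ^ k * p ^ (k - i)) %ₘ p = 0 := by
    rw [modByMonic_eq_zero_iff_dvd hp]
    exact dvd_mul_of_dvd_right (dvd_pow_self p (by omega)) _
  rw [hz, zero_add]

lemma Vd_succ (k : ℕ) : Vd q t p f (k + 1) = q ^ t * Vd q t p f k + nv q t (dig q p f k) := by
  unfold Vd
  rw [Finset.sum_range_succ, Finset.mul_sum]
  have h0 : k + 1 - 1 - k = 0 := by omega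
  rw [h0, Nat.mul_zero, pow_zero, mul_one]
  congr 1
  refine Finset.sum_congr rfl fun i hi => ?_
  rw [Finset.mem_range] at hi
  have he : t * (k + 1 - 1 - i) = t + t * (k - 1 - i) := by
    rw [show k + 1 - 1 - i = (k - 1 - i) + 1 by omega]; ring
  rw [he, pow_add]; ring

lemma Vd_lt (k : ℕ) : Vd q t p f k < q ^ (t * k) := by
  induction k with
  | zero => simp [Vd]
  | succ k ih =>
    have h1 : nv q t (dig q p f k) < q ^ t := nv_lt t _
    have h2 : q ^ t * Vd q t p f k + nv q t (dig q p f k) + 1 ≤ q ^ t * (Vd q t p f k + 1) := by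
      rw [Nat.mul_add, Nat.mul_one]; omega
    have h3 : q ^ t * (Vd q t p f k + 1) ≤ q ^ t * q ^ (t * k) := Nat.mul_le_mul_left _ ih
    rw [Vd_succ, show t * (k + 1) = t + t * k by ring, pow_add]
    omega

lemma Vd_sandwich {k m : ℕ} (hk : k ≤ m) :
    Vd q t p f k * q ^ (t * (m - k)) ≤ Vd q t p f m ∧
      Vd q t p f m < (Vd q t p f k + 1) * q ^ (t * (m - k)) := by
  induction m, hk using Nat.le_induction with
  | base => simp
  | succ m hm ih =>
    have he : t * (m + 1 - k) = t * (m - k) + t := by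
      rw [show m + 1 - k = (m - k) + 1 by omega]; ring
    have h1 : nv q t (dig q p f m) < q ^ t := nv_lt t _
    constructor
    · rw [Vd_succ, he, pow_add, ← Nat.mul_assoc]
      calc Vd q t p f k * q ^ (t * (m - k)) * q ^ t ≤ Vd q t p f m * q ^ t :=
        Nat.mul_le_mul_right _ ih.1
      _ ≤ q ^ t * Vd q t p f m := by rw [Nat.mul_comm]
      _ ≤ q ^ t * Vd q t p f m + nv q t (dig q p f m) := Nat.le_add_right _ _
    · rw [Vd_succ, he, pow_add, ← Nat.mul_assoc]
      have h2 : q ^ t * Vd q t p f m + nv q t (dig q p f m) + 1 ≤ q ^ t * (Vd q t p f m + 1) := by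
        rw [Nat.mul_add, Nat.mul_one]; omega
      have h3 : Vd q t p f m + 1 ≤ (Vd q t p f k + 1) * q ^ (t * (m - k)) := ih.2
      calc q ^ t * Vd q t p f m + nv q t (dig q p f m) + 1
          ≤ q ^ t * (Vd q t p f m + 1) := h2
      _ ≤ q ^ t * ((Vd q t p f k + 1) * q ^ (t * (m - k))) := Nat.mul_le_mul_left _ h3
      _ = (Vd q t p f k + 1) * q ^ (t * (m - k)) * q ^ t := by ring

lemma nv_dig_eq_of_Vd_eq {k : ℕ} (h : Vd q t p f k = Vd q t p g k) :
    ∀ i < k, nv q t (dig q p f i) = nv q t (dig q p g i) := by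
  induction k with
  | zero => intro i hi; omega
  | succ k ih =>
    rw [Vd_succ, Vd_succ] at h
    have hq : 0 < q ^ t := Nat.pow_pos (by have := (q2 (q := q)); omega)
    have hcf : nv q t (dig q p f k) < q ^ t := nv_lt t _
    have hcg : nv q t (dig q p g k) < q ^ t := nv_lt t _
    have hc : nv q t (dig q p f k) = nv q t (dig q p g k) := by
      have := congrArg (· % q ^ t) h
      simpa [Nat.mul_add_mod, Nat.mod_eq_of_lt hcf, Nat.mod_eq_of_lt hcg] using this
    have hA : Vd q t p f k = Vd q t p g k := Nat.eq_of_mul_eq_mul_left hq (by omega)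
    intro i hi
    rcases Nat.lt_succ_iff_lt_or_eq.mp hi with hi' | rfl
    · exact ih hA i hi'
    · exact hc

lemma mod_eq_of_Vd_eq (hp : p.Monic) (hpt : p.natDegree = t) {k : ℕ}
    (h : Vd q t p f k = Vd q t p g k) : f %ₘ p ^ k = g %ₘ p ^ k := by
  have hnv := nv_dig_eq_of_Vd_eq h
  have hdig : ∀ i < k, dig q p f i = dig q p g i := fun i hi =>
    eq_of_nv_eq (dig_degree_lt hp hpt f i) (dig_degree_lt hp hpt g i) (hnv i hi)
  have hmf : (f %ₘ p ^ k).degree < ((t * k : ℕ) : WithBot ℕ) := by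
    have := degree_modByMonic_lt f (hp.pow k)
    rwa [deg_pow hp hpt] at this
  have hmg : (g %ₘ p ^ k).degree < ((t * k : ℕ) : WithBot ℕ) := by
    have := degree_modByMonic_lt g (hp.pow k)
    rwa [deg_pow hp hpt] at this
  calc f %ₘ p ^ k = ∑ i ∈ Finset.range k, dig q p (f %ₘ p ^ k) i * p ^ i :=
    reconstruct hp hpt k _ hmf
  _ = ∑ i ∈ Finset.range k, dig q p (g %ₘ p ^ k) i * p ^ i := by
      refine Finset.sum_congr rfl fun i hi => ?_
      rw [Finset.mem_range] at hi
      rw [dig_mod hp hi, dig_mod hp hi, hdig i hi]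
  _ = g %ₘ p ^ k := (reconstruct hp hpt k _ hmg).symm

lemma Vd_eq_of_mod_eq (hp : p.Monic) {k : ℕ} (h : f %ₘ p ^ k = g %ₘ p ^ k) :
    Vd q t p f k = Vd q t p g k := by
  unfold Vd
  refine Finset.sum_congr rfl fun i hi => ?_
  rw [Finset.mem_range] at hi
  rw [← dig_mod hp hi f, ← dig_mod hp hi g, h]

lemma Vd_eq_iff_dvd (hp : p.Monic) (hpt : p.natDegree = t) {k : ℕ} :
    Vd q t p f k = Vd q t p g k ↔ p ^ k ∣ f - g := by
  constructor
  · intro h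
    rw [← modByMonic_eq_zero_iff_dvd (hp.pow k), sub_modByMonic,
      mod_eq_of_Vd_eq hp hpt h, sub_self]
  · intro h
    exact Vd_eq_of_mod_eq hp (by
      rw [← sub_eq_zero, ← sub_modByMonic, (modByMonic_eq_zero_iff_dvd (hp.pow k)).mpr h])

lemma pev_zero : pev q 0 = 0 := by simp [pev]

lemma pev_eq (ht1 : 1 ≤ t) {g : Polynomial (ZMod q)} (hg : g.degree < (t : ℕ)) :
    pev q g = (nv q t g : ℝ) / (q : ℝ) ^ (t - 1) := by
  have hq0 : (0 : ℝ) < q := by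
    have := (q2 (q := q)); positivity
  have hnat : g.natDegree < t := by
    rcases eq_or_ne g 0 with rfl | h0
    · simp; omega
    · rwa [degree_eq_natDegree h0, Nat.cast_lt] at hg
  have hext : pev q g = ∑ j ∈ Finset.range t, ((g.coeff j).val : ℝ) / (q : ℝ) ^ j := by
    unfold pev
    refine Finset.sum_subset (Finset.range_subset_range.mpr (by omega)) fun j _ hj => ?_
    rw [Finset.mem_range, not_lt] at hj
    rw [Polynomial.coeff_eq_zero_of_natDegree_lt (by omega), ZMod.val_zero]
    simp
  rw [hext]
  unfold nv
  push_cast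
  rw [Finset.sum_div]
  refine Finset.sum_congr rfl fun j hj => ?_
  rw [Finset.mem_range] at hj
  rw [div_eq_div_iff (by positivity) (by positivity), mul_assoc, ← pow_add,
    show t - 1 - j + j = t - 1 by omega]

lemma rp_eq (ht1 : 1 ≤ t) (hp : p.Monic) (hpt : p.natDegree = t) {m : ℕ}
    (hm : f.natDegree + 1 ≤ m) :
    rp q t p f = (Vd q t p f m : ℝ) / (q : ℝ) ^ (t * m) := by
  have hq0 : (0 : ℝ) < q := by
    have := (q2 (q := q)); positivity
  have hext : rp q t p f
      = (∑ i ∈ Finset.range m, pev q (dig q p f i) / (q : ℝ) ^ (i * t)) / q := by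
    unfold rp
    congr 1
    refine Finset.sum_subset (Finset.range_subset_range.mpr hm) fun i _ hi => ?_
    rw [Finset.mem_range, not_lt] at hi
    rw [show ((f /ₘ p ^ i) %ₘ p : Polynomial (ZMod q)) = dig q p f i from rfl,
      dig_eq_zero hp hpt ht1 (by omega), pev_zero, zero_div]
  rw [hext]
  unfold Vd
  push_cast
  rw [Finset.sum_div, Finset.sum_div]
  refine Finset.sum_congr rfl fun i hi => ?_
  rw [Finset.mem_range] at hi
  have hE : (q : ℝ) ^ (t * (m - 1 - i)) * ((q : ℝ) ^ (t - 1) * ((q : ℝ) ^ (i * t) * (q : ℝ)))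
      = (q : ℝ) ^ (t * m) := by
    rw [← pow_succ, ← pow_add, ← pow_add]
    congr 1
    have h1 : t * (i + 1) = i * t + t := by ring
    have h2 : t * m = t * (m - 1 - i) + t * (i + 1) := by
      rw [← Nat.mul_add]; congr 1; omega
    omega
  rw [pev_eq ht1 (dig_degree_lt hp hpt f i), div_div, div_div,
    div_eq_div_iff (by positivity) (by positivity), ← hE]
  ring

lemma rp_mem_iff (ht1 : 1 ≤ t) (hp : p.Monic) (hpt : p.natDegree = t) (k c : ℕ) :
    rp q t p f ∈ Set.Ico ((c : ℝ) / (q : ℝ) ^ (t * k) ) (((c : ℝ) + 1) / (q : ℝ) ^ (t * k))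
      ↔ Vd q t p f k = c := by
  have hq0 : (0 : ℝ) < q := by
    have := (q2 (q := q)); positivity
  set m := max (f.natDegree + 1) k with hmdef
  have hm : f.natDegree + 1 ≤ m := le_max_left _ _
  have hk : k ≤ m := le_max_right _ _
  have hsplit : (q : ℝ) ^ (t * m) = (q : ℝ) ^ (t * k) * (q : ℝ) ^ (t * (m - k)) := by
    rw [← pow_add, ← Nat.mul_add]
    congr 2
    omega
  rw [rp_eq ht1 hp hpt hm, Set.mem_Ico]
  have h1 : ((c : ℝ) / (q : ℝ) ^ (t * k) ≤ (Vd q t p f m : ℝ) / (q : ℝ) ^ (t * m))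
      ↔ c * q ^ (t * (m - k)) ≤ Vd q t p f m := by
    rw [hsplit, div_le_div_iff₀ (by positivity) (by positivity)]
    rw [show (c : ℝ) * ((q : ℝ) ^ (t * k) * (q : ℝ) ^ (t * (m - k)))
        = ((c * q ^ (t * (m - k)) : ℕ) : ℝ) * (q : ℝ) ^ (t * k) by push_cast; ring]
    rw [mul_le_mul_iff_left₀ (by positivity), Nat.cast_le]
  have h2 : ((Vd q t p f m : ℝ) / (q : ℝ) ^ (t * m) < ((c : ℝ) + 1) / (q : ℝ) ^ (t * k))
      ↔ Vd q t p f m < (c + 1) * q ^ (t * (m - k)) := by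
    rw [hsplit, div_lt_div_iff₀ (by positivity) (by positivity)]
    rw [show ((c : ℝ) + 1) * ((q : ℝ) ^ (t * k) * (q : ℝ) ^ (t * (m - k)))
        = (((c + 1) * q ^ (t * (m - k)) : ℕ) : ℝ) * (q : ℝ) ^ (t * k) by push_cast; ring]
    rw [mul_lt_mul_iff_left₀ (by positivity), Nat.cast_lt]
  rw [h1, h2]
  have hs := Vd_sandwich (q := q) (t := t) (p := p) (f := f) hk
  constructor
  · rintro ⟨hle, hlt⟩
    have e1 : Vd q t p f m / q ^ (t * (m - k)) = c := Nat.div_eq_of_lt_le hle hlt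
    have e2 : Vd q t p f m / q ^ (t * (m - k)) = Vd q t p f k :=
      Nat.div_eq_of_lt_le hs.1 hs.2
    omega
  · rintro rfl
    exact hs

lemma pows_coprime {d : ℕ} {p : Fin d → Polynomial (ZMod q)}
    (hmonic : ∀ i, (p i).Monic) (hirr : ∀ i, Irreducible (p i))
    (hdeg : ∀ i, (p i).natDegree = t) (hinj : Function.Injective p) (k : Fin d → ℕ) :
    Pairwise (Function.onFun IsCoprime fun i => p i ^ k i) := by
  intro i j hij
  have hpq : IsCoprime (p i) (p j) := by
    rw [(hirr i).coprime_iff_not_dvd]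
    intro hdvd
    exact hij (hinj (eq_of_dvd_of_natDegree_le_of_leadingCoeff hdvd
      (by rw [hdeg, hdeg])
      (by rw [(hmonic i).leadingCoeff, (hmonic j).leadingCoeff])))
  exact hpq.pow

end Aux

/-- for a canonical box `B`, `r⁻¹(B) = A + D·F[x]` with
`D = ∏ i, p i ^ k i`, `A` the unique polynomial of degree `< t(k₁+⋯+k_d)` with `r(A) ∈ B`;
moreover `deg D = t(k₁+⋯+k_d)`. -/
theorem stmt10 (q d t : ℕ) [Fact q.Prime] (hd : 2 ≤ d)
    (ht : t = ⌈2 * Real.log d / Real.log q + 2⌉₊)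
    (p : Fin d → Polynomial (ZMod q))
    (hmonic : ∀ i, (p i).Monic) (hirr : ∀ i, Irreducible (p i))
    (hdeg : ∀ i, (p i).natDegree = t) (hinj : Function.Injective p)
    (k a : Fin d → ℕ) (ha : ∀ i, a i + 1 ≤ q ^ (t * k i)) :
    (∏ i, p i ^ k i).natDegree = t * ∑ i, k i ∧
    (∃! A : Polynomial (ZMod q),
      A.degree < ((t * ∑ i, k i : ℕ) : WithBot ℕ) ∧
        rmap q t d p A ∈ canonicalBox q t d k a) ∧
    (∀ A : Polynomial (ZMod q),
      A.degree < ((t * ∑ i, k i : ℕ) : WithBot ℕ) →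
      rmap q t d p A ∈ canonicalBox q t d k a →
      {f : Polynomial (ZMod q) | rmap q t d p f ∈ canonicalBox q t d k a}
        = {f : Polynomial (ZMod q) | ∃ g, f = A + (∏ i, p i ^ k i) * g}) := by
  have hq2 : 2 ≤ q := (Fact.out : q.Prime).two_le
  have ht1 : 1 ≤ t := by
    rw [ht]
    apply Nat.one_le_ceil_iff.mpr
    have hlogd : (0:ℝ) ≤ Real.log d := Real.log_nonneg (by exact_mod_cast (by omega : 1 ≤ d))
    have hlogq : (0:ℝ) ≤ Real.log q := Real.log_nonneg (by exact_mod_cast (by omega : 1 ≤ q))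
    have h0 : (0:ℝ) ≤ 2 * Real.log d / Real.log q := div_nonneg (by linarith) hlogq
    linarith
  set n := t * ∑ i, k i with hn
  set D := ∏ i, p i ^ k i with hD
  have hDmonic : D.Monic := monic_prod_of_monic _ _ fun i _ => (hmonic i).pow _
  have hDdeg : D.natDegree = n := by
    rw [hD, natDegree_prod _ _ fun i _ => ((hmonic i).pow (k i)).ne_zero]
    have hcong : ∀ i ∈ Finset.univ, (p i ^ k i).natDegree = k i * t := fun i _ => by
      rw [(hmonic i).natDegree_pow, hdeg i]
    rw [Finset.sum_congr rfl hcong, ← Finset.sum_mul, Nat.mul_comm]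
  have hDdegree : D.degree = (n : WithBot ℕ) := by
    rw [degree_eq_natDegree hDmonic.ne_zero, hDdeg]
  -- membership in the box in terms of the digit values
  have hbox : ∀ f : Polynomial (ZMod q),
      rmap q t d p f ∈ canonicalBox q t d k a ↔ ∀ i, Vd q t (p i) f (k i) = a i := by
    intro f
    unfold canonicalBox rmap
    rw [Set.mem_univ_pi]
    exact forall_congr' fun i => rp_mem_iff ht1 (hmonic i) (hdeg i) (k i) (a i)
  -- congruence conditions vs divisibility by D
  have hdvd_iff : ∀ f g : Polynomial (ZMod q),
      (∀ i, Vd q t (p i) f (k i) = Vd q t (p i) g (k i)) ↔ D ∣ f - g := by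
    intro f g
    constructor
    · intro h
      refine Finset.prod_dvd_of_coprime
        ((pows_coprime hmonic hirr hdeg hinj k).set_pairwise _) fun i _ => ?_
      exact (Vd_eq_iff_dvd (hmonic i) (hdeg i)).mp (h i)
    · intro h i
      exact (Vd_eq_iff_dvd (hmonic i) (hdeg i)).mpr
        ((Finset.dvd_prod_of_mem (fun i => p i ^ k i) (Finset.mem_univ i)).trans h)
  -- uniqueness of a small representative for given digit values
  have huniq : ∀ f g : Polynomial (ZMod q), f.degree < (n : WithBot ℕ) →
      g.degree < (n : WithBot ℕ) →
      (∀ i, Vd q t (p i) f (k i) = Vd q t (p i) g (k i)) → f = g := by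
    intro f g hf hg h
    have hdvd := (hdvd_iff f g).mp h
    have hdeglt : (f - g).degree < D.degree := by
      rw [hDdegree]
      exact lt_of_le_of_lt (degree_sub_le f g) (max_lt hf hg)
    exact sub_eq_zero.mp (eq_zero_of_dvd_of_degree_lt hdvd hdeglt)
  -- existence via counting
  haveI : Fintype (Polynomial.degreeLT (ZMod q) n) :=
    Fintype.ofEquiv (Fin n → ZMod q) (Polynomial.degreeLTEquiv (ZMod q) n).toEquiv.symm
  have hVlt : ∀ (f : Polynomial (ZMod q)) i, Vd q t (p i) f (k i) < q ^ (t * k i) :=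
    fun f i => Vd_lt (k i)
  set Φ : Polynomial.degreeLT (ZMod q) n → (∀ i, Fin (q ^ (t * k i))) :=
    fun f i => ⟨Vd q t (p i) f.1 (k i), hVlt f.1 i⟩ with hΦ
  have hΦinj : Function.Injective Φ := by
    intro f g hfg
    apply Subtype.ext
    refine huniq f.1 g.1 (Polynomial.mem_degreeLT.mp f.2) (Polynomial.mem_degreeLT.mp g.2)
      fun i => ?_
    have := congrFun hfg i
    simpa [hΦ, Fin.ext_iff] using this
  have hcard : Fintype.card (Polynomial.degreeLT (ZMod q) n)
      = Fintype.card (∀ i, Fin (q ^ (t * k i))) := by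
    rw [Fintype.card_congr (Polynomial.degreeLTEquiv (ZMod q) n).toEquiv]
    rw [Fintype.card_fun, ZMod.card, Fintype.card_fin]
    rw [Fintype.card_pi]
    rw [Finset.prod_congr rfl fun i _ => rfl, Finset.prod_congr rfl
      (fun i _ => Fintype.card_fin _)]
    rw [Finset.prod_pow_eq_pow_sum, ← Finset.mul_sum]
  obtain ⟨A₀, hA₀⟩ := ((Fintype.bijective_iff_injective_and_card Φ).mpr ⟨hΦinj, hcard⟩).2
    (fun i => ⟨a i, by have := ha i; omega⟩)
  have hA₀deg : (A₀ : Polynomial (ZMod q)).degree < (n : WithBot ℕ) :=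
    Polynomial.mem_degreeLT.mp A₀.2
  have hA₀val : ∀ i, Vd q t (p i) A₀.1 (k i) = a i := by
    intro i
    have := congrFun hA₀ i
    simpa [hΦ, Fin.ext_iff] using this
  refine ⟨hDdeg, ?_, ?_⟩
  · refine ⟨A₀.1, ⟨hA₀deg, (hbox _).mpr hA₀val⟩, ?_⟩
    rintro y ⟨hydeg, hybox⟩
    exact huniq y A₀.1 hydeg hA₀deg fun i => by rw [(hbox y).mp hybox i, hA₀val i]
  · intro A hAdeg hAbox
    have hAval := (hbox A).mp hAbox
    ext f
    simp only [Set.mem_setOf_eq]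
    constructor
    · intro hf
      obtain ⟨g, hg⟩ := (hdvd_iff f A).mp fun i => by
        rw [(hbox f).mp hf i, hAval i]
      exact ⟨g, by rw [← hg]; ring⟩
    · rintro ⟨g, rfl⟩
      refine (hbox _).mpr fun i => ?_
      have : Vd q t (p i) (A + D * g) (k i) = Vd q t (p i) A (k i) :=
        (hdvd_iff _ _).mpr ⟨g, by ring⟩ i
      rw [this, hAval i]
end

section
/- Fix a prime q, an integer d ≥ 2, t = ⌈2·log_q d + 2⌉, d distinct monic irreducible polynomials p_1, …, p_d of degree t over F = F_q, and a positive integer n with n ≥ 3dt. The number of distinct types T(B), as B ranges over all canonical boxes with q^{−n} ≤ vol(B) ≤ q^{−n+dt−1}, is at most q^{4dt}. -/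
open Finset Polynomial

lemma eraseLow_coeff (q c : ℕ) (f : Polynomial (ZMod q)) (j : ℕ) :
    (eraseLow q c f).coeff j = if c ≤ j then f.coeff j else 0 := by
  rw [eraseLow, Polynomial.finset_sum_coeff]
  simp only [Polynomial.coeff_monomial]
  rw [Finset.sum_ite_eq']
  by_cases hc : c ≤ j <;> by_cases hs : f.coeff j = 0 <;>
    simp [hc, hs, Polynomial.mem_support_iff]

lemma coeff_ext (q : ℕ) (f g : Polynomial (ZMod q)) (c m : ℕ)
    (hf : ∀ j, f.coeff j ≠ 0 → c ≤ j ∧ j < c + m)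
    (hg : ∀ j, g.coeff j ≠ 0 → c ≤ j ∧ j < c + m)
    (h : ∀ i : Fin m, f.coeff (c + i) = g.coeff (c + i)) : f = g := by
  ext j
  by_cases h1 : c ≤ j ∧ j < c + m
  · have := h ⟨j - c, by omega⟩
    simpa [show c + (j - c) = j by omega] using this
  · have hf0 : f.coeff j = 0 := by by_contra hne; exact h1 (hf j hne)
    have hg0 : g.coeff j = 0 := by by_contra hne; exact h1 (hg j hne)
    rw [hf0, hg0]

/-- Claim 2: the number of types `T(B) = (Ā(B), D̄(B))`, over canonical
boxes `B` with `q^(-n) ≤ vol(B) ≤ q^(-n+dt-1)`, is at most `q^(4dt)`. -/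
theorem stmt12 (q d t n : ℕ) [Fact q.Prime] (hd : 2 ≤ d) (hn : 0 < n)
    (ht : t = ⌈2 * Real.log d / Real.log q + 2⌉₊)
    (hnt : 3 * d * t ≤ n)
    (p : Fin d → Polynomial (ZMod q))
    (hmonic : ∀ i, (p i).Monic) (hirr : ∀ i, Irreducible (p i))
    (hdeg : ∀ i, (p i).natDegree = t) (hinj : Function.Injective p)
    (𝓣 : Set (Polynomial (ZMod q) × Polynomial (ZMod q)))
    (h𝓣 : 𝓣 = {T | ∃ (k a : Fin d → ℕ) (A : Polynomial (ZMod q)),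
      (∀ i, a i + 1 ≤ q ^ (t * k i)) ∧
      n - d * t + 1 ≤ t * ∑ i, k i ∧ t * ∑ i, k i ≤ n ∧
      A.degree < ((t * ∑ i, k i : ℕ) : WithBot ℕ) ∧
      rmap q t d p A ∈ canonicalBox q t d k a ∧
      T = (eraseLow q (n - d * t) A, eraseLow q (n - 3 * d * t + 1) (∏ i, p i ^ k i))}) :
    𝓣.Finite ∧ 𝓣.ncard ≤ q ^ (4 * d * t) := by
  have hq : 1 ≤ q := (Fact.out : q.Prime).one_lt.le
  have hsup : ∀ T ∈ 𝓣,
      (∀ j, T.1.coeff j ≠ 0 → n - d * t ≤ j ∧ j < (n - d * t) + d * t) ∧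
      (∀ j, T.2.coeff j ≠ 0 → n - 3 * d * t + 1 ≤ j ∧ j < (n - 3 * d * t + 1) + 3 * d * t) := by
    rintro T hT
    rw [h𝓣] at hT
    obtain ⟨k, a, A, -, h1, h2, hAdeg, -, rfl⟩ := hT
    have hDdeg : (∏ i, p i ^ k i).natDegree = t * ∑ i, k i := by
      rw [Polynomial.natDegree_prod _ _ (fun i _ => pow_ne_zero _ (hmonic i).ne_zero)]
      simp only [Polynomial.natDegree_pow, hdeg]
      rw [Finset.mul_sum]
      exact Finset.sum_congr rfl fun i _ => mul_comm _ _
    constructor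
    · intro j hj
      rw [eraseLow_coeff] at hj
      by_cases hc : n - d * t ≤ j
      · refine ⟨hc, ?_⟩
        rw [if_pos hc] at hj
        have hjn : j < n := by
          by_contra hge
          push_neg at hge
          have : A.degree < (j : WithBot ℕ) :=
            lt_of_lt_of_le hAdeg (by exact_mod_cast le_trans h2 hge)
          exact hj (Polynomial.coeff_eq_zero_of_degree_lt this)
        omega
      · simp [hc] at hj
    · intro j hj
      rw [eraseLow_coeff] at hj
      by_cases hc : n - 3 * d * t + 1 ≤ j
      · refine ⟨hc, ?_⟩
        rw [if_pos hc] at hj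
        have hjn : j ≤ n := le_trans (Polynomial.le_natDegree_of_ne_zero hj) (hDdeg ▸ h2)
        omega
      · simp [hc] at hj
  set Φ : Polynomial (ZMod q) × Polynomial (ZMod q) →
      (Fin (d * t) → ZMod q) × (Fin (3 * d * t) → ZMod q) :=
    fun T => (fun i => T.1.coeff (n - d * t + i), fun i => T.2.coeff (n - 3 * d * t + 1 + i))
    with hΦ
  have hinjOn : Set.InjOn Φ 𝓣 := by
    intro T hT T' hT' hEq
    obtain ⟨h1, h2⟩ := hsup T hT
    obtain ⟨h1', h2'⟩ := hsup T' hT'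
    have e1 := congrArg Prod.fst hEq
    have e2 := congrArg Prod.snd hEq
    have : T.1 = T'.1 :=
      coeff_ext q _ _ _ _ h1 h1' fun i => congrFun e1 i
    have : T.2 = T'.2 :=
      coeff_ext q _ _ _ _ h2 h2' fun i => congrFun e2 i
    exact Prod.ext ‹T.1 = T'.1› ‹T.2 = T'.2›
  have hfin : 𝓣.Finite :=
    Set.Finite.of_finite_image (Set.toFinite _) hinjOn
  refine ⟨hfin, ?_⟩
  have hcard : 𝓣.ncard = (Φ '' 𝓣).ncard := (Set.ncard_image_of_injOn hinjOn).symm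
  rw [hcard]
  calc (Φ '' 𝓣).ncard
      ≤ (Set.univ : Set ((Fin (d * t) → ZMod q) × (Fin (3 * d * t) → ZMod q))).ncard :=
        Set.ncard_le_ncard (Set.subset_univ _) (Set.toFinite _)
    _ = q ^ (4 * d * t) := by
        rw [Set.ncard_univ, Nat.card_eq_fintype_card, Fintype.card_prod,
          Fintype.card_fun, Fintype.card_fun, Fintype.card_fin, Fintype.card_fin,
          ZMod.card, ← pow_add]
        congr 1
        ring
end

section
/- Fix a prime q, an integer d ≥ 2, t = ⌈2·log_q d + 2⌉, d distinct monic irreducible polynomials p_1, …, p_d of degree t over F = F_q, and a positive integer n with n ≥ 3dt. Let B be a canonical box with q^{−n} ≤ vol(B) ≤ q^{−n+dt−1} and type T(B) = (Ā(B), D̄(B)). Then for any polynomial h ∈ F[x] of degree < n + dt and any polynomial g ∈ F[x]: Ā(B) + g·D̄(B) ∈ h + P_{<n−dt} if and only if A(B) + g·D(B) ∈ h + P_{<n−dt}, where P_{<k} denotes the set of polynomials in F[x] of degree < k. -/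
open Finset Polynomial

lemma exists_eq_iff_degree_sub_lt {R : Type*} [CommRing R] (X h : Polynomial R) (c : WithBot ℕ) :
    (∃ f : Polynomial R, f.degree < c ∧ X = h + f) ↔ (X - h).degree < c := by
  constructor
  · rintro ⟨f, hf, rfl⟩; simpa using hf
  · intro hx; exact ⟨X - h, hx, by ring⟩

lemma degree_add_lt_iff {R : Type*} [CommRing R] (Y E : Polynomial R) (c : WithBot ℕ)
    (hE : E.degree < c) : (Y + E).degree < c ↔ Y.degree < c := by
  constructor
  · intro H
    have hY : Y = Y + E + -E := by ring
    rw [hY]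
    exact lt_of_le_of_lt (degree_add_le _ _) (max_lt H (by rwa [degree_neg]))
  · intro H
    exact lt_of_le_of_lt (degree_add_le _ _) (max_lt H hE)


/-- Claim 3: for a canonical box `B` with `q^(-n) ≤ vol(B) ≤ q^(-n+dt-1)`,
any `h` of degree `< n + dt` and any `g`, we have
`Ā(B) + g·D̄(B) ∈ h + P_{<n−dt}` iff `A(B) + g·D(B) ∈ h + P_{<n−dt}`. -/
theorem stmt13 (q d t n : ℕ) [Fact q.Prime] (hd : 2 ≤ d) (hn : 0 < n)
    (ht : t = ⌈2 * Real.log d / Real.log q + 2⌉₊)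
    (hnt : 3 * d * t ≤ n)
    (p : Fin d → Polynomial (ZMod q))
    (hmonic : ∀ i, (p i).Monic) (hirr : ∀ i, Irreducible (p i))
    (hdeg : ∀ i, (p i).natDegree = t) (hinj : Function.Injective p)
    (k a : Fin d → ℕ) (ha : ∀ i, a i + 1 ≤ q ^ (t * k i))
    (hvol₁ : n - d * t + 1 ≤ t * ∑ i, k i) (hvol₂ : t * ∑ i, k i ≤ n)
    (A : Polynomial (ZMod q))
    (hA : A.degree < ((t * ∑ i, k i : ℕ) : WithBot ℕ))
    (hAB : rmap q t d p A ∈ canonicalBox q t d k a)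
    (h g : Polynomial (ZMod q)) (hh : h.degree < ((n + d * t : ℕ) : WithBot ℕ)) :
    (∃ f : Polynomial (ZMod q), f.degree < ((n - d * t : ℕ) : WithBot ℕ) ∧
        eraseLow q (n - d * t) A + g * eraseLow q (n - 3 * d * t + 1) (∏ i, p i ^ k i)
          = h + f) ↔
    (∃ f : Polynomial (ZMod q), f.degree < ((n - d * t : ℕ) : WithBot ℕ) ∧
        A + g * (∏ i, p i ^ k i) = h + f) := by
  rw [mul_assoc 3 d t] at hnt ⊢
  set K := ∑ i, k i with hK
  set m := d * t with hm
  set D := ∏ i, p i ^ k i with hDdef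
  set N := t * K with hN
  -- basic numeric facts
  have htpos : 1 ≤ t := by
    rcases Nat.eq_zero_or_pos t with ht0 | h1
    · exfalso
      have hm0 : m = 0 := by rw [hm, ht0, mul_zero]
      have hN0 : N = 0 := by rw [hN, ht0, zero_mul]
      omega
    · exact h1
  have hm2 : 2 ≤ m := by
    have h2 := Nat.mul_le_mul hd htpos
    rw [mul_one] at h2
    omega
  -- degree of D
  have hDmonic : D.Monic := monic_prod_of_monic _ _ fun i _ => (hmonic i).pow _
  have hDdeg : D.natDegree = N := by
    rw [hDdef, natDegree_prod _ _ (fun i _ => pow_ne_zero _ (hmonic i).ne_zero)]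
    simp only [natDegree_pow, hdeg]
    rw [← Finset.sum_mul, mul_comm, hN, hK]
  -- facts about the truncated D
  set Db := eraseLow q (n - 3 * m + 1) D with hDb
  have hDbN : Db.coeff N = 1 := by
    rw [hDb, eraseLow_coeff, if_pos (by omega), ← hDdeg]
    exact hDmonic.coeff_natDegree
  have hDble : Db.natDegree ≤ N := by
    rw [natDegree_le_iff_coeff_eq_zero]
    intro j hj
    rw [hDb, eraseLow_coeff]
    have : D.coeff j = 0 := coeff_eq_zero_of_natDegree_lt (by omega)
    simp [this]
  have hDbdeg : Db.natDegree = N :=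
    le_antisymm hDble (le_natDegree_of_ne_zero (by rw [hDbN]; exact one_ne_zero))
  have hDblc : Db.leadingCoeff = 1 := by
    rw [Polynomial.leadingCoeff, hDbdeg, hDbN]
  -- rewrite the two existential statements
  rw [exists_eq_iff_degree_sub_lt, exists_eq_iff_degree_sub_lt]
  by_cases hg : g.natDegree < 2 * m
  · -- small g: difference of the two expressions has small degree
    have key : eraseLow q (n - m) A + g * Db - h
        = (A + g * D - h) + ((eraseLow q (n - m) A - A) + g * (Db - D)) := by ring
    rw [key]
    have hDdiff : (Db - D).natDegree ≤ n - 3 * m := by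
      rw [natDegree_le_iff_coeff_eq_zero]
      intro j hj
      have hj' : n - 3 * m + 1 ≤ j := by omega
      simp [hDb, coeff_sub, eraseLow_coeff, hj']
    have hE : ((eraseLow q (n - m) A - A) + g * (Db - D)).degree
        < ((n - m : ℕ) : WithBot ℕ) := by
      rw [degree_lt_iff_coeff_zero]
      intro j hj
      have hmul : (g * (Db - D)).coeff j = 0 := by
        apply coeff_eq_zero_of_natDegree_lt
        calc (g * (Db - D)).natDegree ≤ g.natDegree + (Db - D).natDegree := natDegree_mul_le
          _ < j := by omega
      simp [coeff_add, coeff_sub, eraseLow_coeff, hj, hmul]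
    exact degree_add_lt_iff _ _ _ hE
  · -- large g: both sides are false
    push_neg at hg
    have hgne : g ≠ 0 := by
      intro h0
      rw [h0, natDegree_zero] at hg
      omega
    set j0 := g.natDegree + N with hj0
    have hAco : A.coeff j0 = 0 := by
      apply coeff_eq_zero_of_degree_lt
      refine lt_of_lt_of_le hA ?_
      exact_mod_cast Nat.le_add_left N g.natDegree
    have hAbco : (eraseLow q (n - m) A).coeff j0 = 0 := by
      rw [eraseLow_coeff, hAco, ite_self]
    have hhco : h.coeff j0 = 0 := by
      apply coeff_eq_zero_of_degree_lt
      refine lt_of_lt_of_le hh ?_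
      exact_mod_cast (by omega : n + m ≤ j0)
    have hDco : (g * D).coeff j0 = g.leadingCoeff := by
      have h1 := coeff_mul_degree_add_degree g D
      rw [hDdeg, hDmonic.leadingCoeff, mul_one] at h1
      exact h1
    have hDbco : (g * Db).coeff j0 = g.leadingCoeff := by
      have h1 := coeff_mul_degree_add_degree g Db
      rw [hDbdeg, hDblc, mul_one] at h1
      exact h1
    have hfalse : ∀ X : Polynomial (ZMod q), X.coeff j0 = g.leadingCoeff →
        ¬ (X - h).degree < ((n - m : ℕ) : WithBot ℕ) := by
      intro X hX hlt
      have hc : (X - h).coeff j0 ≠ 0 := by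
        rw [coeff_sub, hX, hhco, sub_zero]
        exact leadingCoeff_ne_zero.mpr hgne
      have hge : ((n - m : ℕ) : WithBot ℕ) ≤ (X - h).degree := by
        refine le_trans ?_ (le_degree_of_ne_zero hc)
        exact_mod_cast (by omega : n - m ≤ j0)
      exact absurd hlt (not_lt.mpr hge)
    apply iff_of_false
    · exact hfalse _ (by rw [coeff_add, hAbco, zero_add, hDbco])
    · exact hfalse _ (by rw [coeff_add, hAco, zero_add, hDco])
end
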